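/- Let Z be the graph obtained from the complete bipartite graph K_{t,t−4} with parts {v₁,...,v_t} and {u₁,...,u_{t−4}} by adding the 6 edges (v_i,v_j) for 1 ≤ i < j ≤ 4. Then Z contains K_t as a minor. -/

import Mathlib

/-- A model of `H` in `G`: each vertex of `H` is assigned a nonempty connected
branch set in `G`, distinct vertices get disjoint branch sets, and adjacent
vertices of `H` get branch sets joined by an edge of `G`. -/
def IsMinorModel {V : Type*} {W : Type*} (G : SimpleGraph V) (H : SimpleGraph W)
    (f : W → Set V) : Prop :=
  (∀ w : W, (f w).Nonempty) ∧
  (∀ w : W, (G.induce (f w)).Connected) ∧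
  (∀ w w' : W, w ≠ w' → Disjoint (f w) (f w')) ∧
  (∀ w w' : W, H.Adj w w' → ∃ u ∈ f w, ∃ v ∈ f w', G.Adj u v)

/-- `H` is a minor of `G` iff there is a model of `H` in `G`. -/
def HasMinor {V : Type*} {W : Type*} (G : SimpleGraph V) (H : SimpleGraph W) : Prop :=
  ∃ f : W → Set V, IsMinorModel G H f

/-- The graph `Z`: the complete bipartite graph `K_{t,t-4}` with parts
`{v₁,...,v_t}` (the `inl` vertices) and `{u₁,...,u_{t-4}}` (the `inr` vertices),
together with the 6 additional edges `(v_i, v_j)` for `1 ≤ i < j ≤ 4`. -/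
def Zgraph (t : ℕ) : SimpleGraph (Fin t ⊕ Fin (t - 4)) :=
  SimpleGraph.fromRel (fun a b =>
    ((∃ i : Fin t, a = Sum.inl i) ∧ (∃ j : Fin (t - 4), b = Sum.inr j)) ∨
    (∃ i j : Fin t, a = Sum.inl i ∧ b = Sum.inl j ∧ i.val < 4 ∧ j.val < 4))

lemma Zgraph_adj_inl_inr (t : ℕ) (i : Fin t) (j : Fin (t - 4)) :
    (Zgraph t).Adj (Sum.inl i) (Sum.inr j) := by
  simp only [Zgraph, SimpleGraph.fromRel_adj]
  exact ⟨by simp, Or.inl (Or.inl ⟨⟨i, rfl⟩, ⟨j, rfl⟩⟩)⟩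

lemma Zgraph_adj_inl_inl (t : ℕ) (i j : Fin t) (hij : i ≠ j)
    (hi : i.val < 4) (hj : j.val < 4) :
    (Zgraph t).Adj (Sum.inl i) (Sum.inl j) := by
  simp only [Zgraph, SimpleGraph.fromRel_adj]
  exact ⟨by simpa using hij, Or.inl (Or.inr ⟨i, j, rfl, rfl, hi, hj⟩)⟩

lemma induce_connected_of_adj_or_eq {V : Type*} (G : SimpleGraph V) (s : Set V)
    (hne : s.Nonempty) (h : ∀ a ∈ s, ∀ b ∈ s, a = b ∨ G.Adj a b) :
    (G.induce s).Connected := by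
  rw [SimpleGraph.connected_iff]
  refine ⟨?_, ⟨⟨hne.choose, hne.choose_spec⟩⟩⟩
  intro ⟨a, ha⟩ ⟨b, hb⟩
  · rcases h a ha b hb with heq | hadj
    · subst heq; rfl
    · exact SimpleGraph.Adj.reachable (by simpa using hadj)

/-- The graph obtained from `K_{t,t-4}` by adding all 6 edges among the first
four vertices `v₁,...,v₄` of the large part contains `K_t` as a minor. -/
theorem Zgraph_hasMinor_kt (t : ℕ) (ht : 5 ≤ t) :
    HasMinor (Zgraph t) (SimpleGraph.completeGraph (Fin t)) := by
  refine ⟨fun i => if i.val < 4 then {Sum.inl i}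
    else {Sum.inl i, Sum.inr ⟨i.val - 4, by omega⟩}, ?_, ?_, ?_, ?_⟩
  · intro i
    dsimp only
    by_cases h : i.val < 4
    · rw [if_pos h]; simp
    · rw [if_neg h]; simp
  · intro i
    dsimp only
    by_cases h : i.val < 4
    · rw [if_pos h]
      exact induce_connected_of_adj_or_eq _ _ (by simp)
        (by rintro a ha b hb; simp only [Set.mem_singleton_iff] at ha hb;
            subst ha; subst hb; left; rfl)
    · rw [if_neg h]
      refine induce_connected_of_adj_or_eq _ _ (by simp) ?_
      intro a ha b hb
      simp only [Set.mem_insert_iff, Set.mem_singleton_iff] at ha hb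
      rcases ha with rfl | rfl <;> rcases hb with rfl | rfl
      · left; rfl
      · right; exact Zgraph_adj_inl_inr t i _
      · right; exact (Zgraph_adj_inl_inr t i _).symm
      · left; rfl
  · intro i j hij
    have hval : i.val ≠ j.val := fun h => hij (Fin.ext h)
    rw [Set.disjoint_left]
    intro x hx hx'
    dsimp only at hx hx'
    by_cases hi : i.val < 4 <;> by_cases hj : j.val < 4
    · rw [if_pos hi] at hx; rw [if_pos hj] at hx'
      simp only [Set.mem_singleton_iff] at hx hx'
      subst hx; simp only [Sum.inl.injEq] at hx'; exact hval (congrArg Fin.val hx')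
    · rw [if_pos hi] at hx; rw [if_neg hj] at hx'
      simp only [Set.mem_singleton_iff] at hx
      simp only [Set.mem_insert_iff, Set.mem_singleton_iff] at hx'
      subst hx
      rcases hx' with h' | h' <;> simp only [Sum.inl.injEq, reduceCtorEq] at h'
      exact hval (congrArg Fin.val h')
    · rw [if_neg hi] at hx; rw [if_pos hj] at hx'
      simp only [Set.mem_singleton_iff] at hx'
      simp only [Set.mem_insert_iff, Set.mem_singleton_iff] at hx
      subst hx'
      rcases hx with h' | h' <;> simp only [Sum.inl.injEq, reduceCtorEq] at h'
      exact hval (congrArg Fin.val h'.symm)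
    · rw [if_neg hi] at hx; rw [if_neg hj] at hx'
      simp only [Set.mem_insert_iff, Set.mem_singleton_iff] at hx hx'
      rcases hx with rfl | rfl <;> rcases hx' with h' | h' <;>
        simp only [Sum.inl.injEq, Sum.inr.injEq, Fin.mk.injEq, reduceCtorEq] at h'
      · exact hval (congrArg Fin.val h')
      · omega
  · intro i j hij
    simp only [SimpleGraph.completeGraph, SimpleGraph.top_adj] at hij
    by_cases hi : i.val < 4 <;> by_cases hj : j.val < 4
    · exact ⟨Sum.inl i, by simp [hi], Sum.inl j, by simp [hj],
        Zgraph_adj_inl_inl t i j hij hi hj⟩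
    · exact ⟨Sum.inl i, by simp [hi], Sum.inr ⟨j.val - 4, by omega⟩,
        by simp [hj], Zgraph_adj_inl_inr t i _⟩
    · exact ⟨Sum.inr ⟨i.val - 4, by omega⟩, by simp [hi], Sum.inl j,
        by simp [hj], (Zgraph_adj_inl_inr t j _).symm⟩
    · exact ⟨Sum.inl i, by simp [hi], Sum.inr ⟨j.val - 4, by omega⟩,
        by simp [hj], Zgraph_adj_inl_inr t i _⟩
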